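/- Let r > 1 be real, x ≥ 4, and S a set of primes with counting function π_S. Then ∑_{√(x/r) < p ≤ √x, p ∈ S} Li(x/p) = π_S(√x)·Li(√x) − π_S(√(x/r))·Li(√(rx)) + ∫_{√x}^{√(rx)} π_S(x/t)/log t dt. -/

import Mathlib

open Real Finset
open scoped Classical

noncomputable def Li (x : ℝ) : ℝ := if x < 2 then 0 else ∫ t in (2:ℝ)..x, 1 / Real.log t

/-- Counting function of the primes in `S` up to `y`. -/
noncomputable def piS (S : Set ℕ) (y : ℝ) : ℕ :=
  ((Finset.range (Nat.floor y + 1)).filter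
    (fun p => Nat.Prime p ∧ p ∈ S ∧ (p : ℝ) ≤ y)).card

lemma piS_eq_card (S : Set ℕ) (y : ℝ) (n : ℕ) (hn : Nat.floor y < n) :
    piS S y = ((Finset.range n).filter
      (fun p => Nat.Prime p ∧ p ∈ S ∧ (p : ℝ) ≤ y)).card := by
  unfold piS
  congr 1
  apply Finset.ext
  intro p
  simp only [Finset.mem_filter, Finset.mem_range]
  constructor
  · rintro ⟨hp, h⟩; exact ⟨by omega, h⟩
  · rintro ⟨_, h⟩
    have := Nat.le_floor h.2.2
    exact ⟨by omega, h⟩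

theorem stmt_8 (r x : ℝ) (hr : 1 < r) (hx : 4 ≤ x)
    (S : Set ℕ) (hS : ∀ p ∈ S, Nat.Prime p) :
    (∑ p ∈ (Finset.range (Nat.floor (Real.sqrt x) + 1)).filter
        (fun p => Nat.Prime p ∧ p ∈ S ∧ Real.sqrt (x / r) < (p : ℝ) ∧ (p : ℝ) ≤ Real.sqrt x),
        Li (x / p)) =
      (piS S (Real.sqrt x) : ℝ) * Li (Real.sqrt x)
        - (piS S (Real.sqrt (x / r)) : ℝ) * Li (Real.sqrt (r * x))
        + ∫ t in (Real.sqrt x)..(Real.sqrt (r * x)), (piS S (x / t) : ℝ) / Real.log t := by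
  have hx0 : (0:ℝ) < x := by linarith
  have hr0 : (0:ℝ) < r := by linarith
  set a := Real.sqrt x with ha_def
  set b := Real.sqrt (r * x) with hb_def
  set c := Real.sqrt (x / r) with hc_def
  have ha2 : (2:ℝ) ≤ a := by
    have h4 : Real.sqrt 4 = 2 := by
      rw [show (4:ℝ) = 2 ^ 2 by norm_num, Real.sqrt_sq (by norm_num)]
    calc (2:ℝ) = Real.sqrt 4 := h4.symm
      _ ≤ a := Real.sqrt_le_sqrt hx
  have ha0 : (0:ℝ) < a := by linarith
  have haa : a * a = x := Real.mul_self_sqrt hx0.le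
  have hc0 : (0:ℝ) < c := Real.sqrt_pos.mpr (by positivity)
  have hcb : c * b = x := by
    rw [hc_def, hb_def, ← Real.sqrt_mul (by positivity)]
    rw [show x / r * (r * x) = x ^ 2 by field_simp]
    exact Real.sqrt_sq hx0.le
  have hca : c < a := Real.sqrt_lt_sqrt (by positivity) (div_lt_self hx0 hr)
  have hab : a < b := Real.sqrt_lt_sqrt hx0.le ((lt_mul_iff_one_lt_left hx0).mpr hr)
  have hb2 : (2:ℝ) ≤ b := by linarith
  -- integrability of 1/log on [u,v] ⊆ [2,∞)
  have hlogpos : ∀ t : ℝ, 2 ≤ t → 0 < Real.log t := fun t ht => Real.log_pos (by linarith)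
  have hInt : ∀ u v : ℝ, 2 ≤ u → 2 ≤ v →
      IntervalIntegrable (fun t => 1 / Real.log t) MeasureTheory.volume u v := by
    intro u v hu hv
    apply ContinuousOn.intervalIntegrable
    apply ContinuousOn.div continuousOn_const
    · apply Real.continuousOn_log.mono
      intro t ht
      have h2t : (2:ℝ) ≤ t := le_trans (le_min hu hv) ht.1
      simp only [Set.mem_compl_iff, Set.mem_singleton_iff]
      intro h; rw [h] at h2t; linarith
    · intro t ht
      have h2t : (2:ℝ) ≤ t := le_trans (le_min hu hv) ht.1
      exact (hlogpos t h2t).ne'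
  have hLi : ∀ y : ℝ, 2 ≤ y → Li y = ∫ t in (2:ℝ)..y, 1 / Real.log t :=
    fun y hy => if_neg (not_lt.mpr hy)
  have hLidiff : ∀ u v : ℝ, 2 ≤ u → 2 ≤ v →
      Li v - Li u = ∫ t in u..v, 1 / Real.log t := by
    intro u v hu hv
    rw [hLi u hu, hLi v hv]
    exact intervalIntegral.integral_interval_sub_left (hInt 2 v le_rfl hv) (hInt 2 u le_rfl hu)
  set n := Nat.floor a + 1 with hn_def
  set F := (Finset.range n).filter
      (fun p => Nat.Prime p ∧ p ∈ S ∧ c < (p : ℝ) ∧ (p : ℝ) ≤ a) with hF_def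
  -- key splitting identity
  have hsplit : ∀ t ∈ Set.Icc a b,
      piS S (x / t) = piS S c + (F.filter (fun p : ℕ => t ≤ x / (p : ℝ))).card := by
    intro t ht
    have ht0 : (0:ℝ) < t := lt_of_lt_of_le ha0 ht.1
    have hxt_le_a : x / t ≤ a := by
      rw [div_le_iff₀ ht0]; nlinarith [ht.1]
    have hxt_nonneg : 0 ≤ x / t := by positivity
    have hc_le_xt : c ≤ x / t := by
      rw [le_div_iff₀ ht0]; nlinarith [ht.2]
    have hfl1 : Nat.floor (x / t) < n := by
      have := Nat.floor_le_floor hxt_le_a; omega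
    have hfl2 : Nat.floor c < n := by
      have := Nat.floor_le_floor hca.le; omega
    rw [piS_eq_card S (x / t) n hfl1, piS_eq_card S c n hfl2]
    rw [← Finset.card_filter_add_card_filter_not
      (p := fun p => (p : ℝ) ≤ c) (s := (Finset.range n).filter
        (fun p => Nat.Prime p ∧ p ∈ S ∧ (p : ℝ) ≤ x / t))]
    congr 1
    · congr 1
      apply Finset.ext
      intro p
      simp only [Finset.mem_filter, Finset.mem_range]
      constructor
      · rintro ⟨⟨hpn, hp, hps, _⟩, hpc⟩; exact ⟨hpn, hp, hps, hpc⟩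
      · rintro ⟨hpn, hp, hps, hpc⟩; exact ⟨⟨hpn, hp, hps, le_trans hpc hc_le_xt⟩, hpc⟩
    · congr 1
      apply Finset.ext
      intro p
      simp only [hF_def, Finset.mem_filter, Finset.mem_range]
      constructor
      · rintro ⟨⟨hpn, hp, hps, hpxt⟩, hpc⟩
        push_neg at hpc
        have hp0 : (0:ℝ) < (p:ℝ) := lt_trans hc0 hpc
        refine ⟨⟨hpn, hp, hps, hpc, le_trans hpxt hxt_le_a⟩, ?_⟩
        rw [le_div_iff₀ hp0]
        rw [le_div_iff₀ ht0] at hpxt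
        linarith [mul_comm t (p:ℝ), hpxt]
      · rintro ⟨⟨hpn, hp, hps, hpc, hpa⟩, hpt⟩
        have hp0 : (0:ℝ) < (p:ℝ) := lt_trans hc0 hpc
        rw [le_div_iff₀ hp0] at hpt
        refine ⟨⟨hpn, hp, hps, ?_⟩, not_le.mpr hpc⟩
        rw [le_div_iff₀ ht0]; linarith
  -- 2 ≤ x/p and x/p ∈ [a,b] for p ∈ F
  have hFp : ∀ p ∈ F, a ≤ x / (p:ℝ) ∧ x / (p:ℝ) ≤ b := by
    intro p hp
    simp only [hF_def, Finset.mem_filter] at hp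
    obtain ⟨_, _, _, hpc, hpa⟩ := hp
    have hp0 : (0:ℝ) < (p:ℝ) := lt_trans hc0 hpc
    constructor
    · rw [le_div_iff₀ hp0]; nlinarith
    · rw [div_le_iff₀ hp0]; nlinarith
  -- the integral computation
  have hI : (∫ t in a..b, (piS S (x / t) : ℝ) / Real.log t)
      = (piS S c : ℝ) * (Li b - Li a) + ∑ p ∈ F, (Li (x / (p:ℝ)) - Li a) := by
    have hcong : ∀ t ∈ Set.uIcc a b,
        (piS S (x / t) : ℝ) / Real.log t
          = (piS S c : ℝ) * (1 / Real.log t)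
            + ∑ p ∈ F, Set.indicator {s : ℝ | s ≤ x / (p:ℝ)}
                (fun s => 1 / Real.log s) t := by
      intro t ht
      rw [Set.uIcc_of_le hab.le] at ht
      rw [hsplit t ht, Finset.card_filter]
      push_cast
      rw [add_div, Finset.sum_div]
      congr 1
      · ring
      · apply Finset.sum_congr rfl
        intro p _
        by_cases h : t ≤ x / (p:ℝ)
        · simp [Set.indicator_apply, h]
        · simp [Set.indicator_apply, h]
    rw [intervalIntegral.integral_congr hcong]
    have hint1 : IntervalIntegrable (fun t => (piS S c : ℝ) * (1 / Real.log t))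
        MeasureTheory.volume a b := (hInt a b ha2 hb2).const_mul _
    have hint2 : ∀ p ∈ F, IntervalIntegrable
        (Set.indicator {s : ℝ | s ≤ x / (p:ℝ)} (fun s => 1 / Real.log s))
        MeasureTheory.volume a b := by
      intro p _
      exact ⟨((hInt a b ha2 hb2).1).indicator measurableSet_Iic,
        ((hInt a b ha2 hb2).2).indicator measurableSet_Iic⟩
    have hsum : IntervalIntegrable (fun t => ∑ p ∈ F, Set.indicator {s : ℝ | s ≤ x / (p:ℝ)}
        (fun s => 1 / Real.log s) t) MeasureTheory.volume a b := by
      rw [show (fun t => ∑ p ∈ F, Set.indicator {s : ℝ | s ≤ x / (p:ℝ)}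
          (fun s => 1 / Real.log s) t) = ∑ p ∈ F, Set.indicator {s : ℝ | s ≤ x / (p:ℝ)}
          (fun s => 1 / Real.log s) from funext fun t => (Finset.sum_apply t F _).symm]
      exact IntervalIntegrable.sum F hint2
    rw [intervalIntegral.integral_add hint1 hsum]
    congr 1
    · rw [intervalIntegral.integral_const_mul, ← hLidiff a b ha2 hb2]
    · rw [intervalIntegral.integral_finset_sum hint2]
      apply Finset.sum_congr rfl
      intro p hp
      obtain ⟨h1, h2⟩ := hFp p hp
      rw [intervalIntegral.integral_indicator ⟨h1, h2⟩]
      rw [hLidiff a (x / (p:ℝ)) ha2 (le_trans ha2 h1)]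
  -- π_S(a) = π_S(c) + card F
  have hcard : piS S a = piS S c + F.card := by
    have hxa : x / a = a := by
      rw [div_eq_iff ha0.ne']; exact haa.symm
    have h2 := hsplit a ⟨le_rfl, hab.le⟩
    rw [hxa] at h2
    rw [h2]
    have : F.filter (fun p : ℕ => a ≤ x / (p : ℝ)) = F := by
      apply Finset.filter_true_of_mem
      intro p hp
      exact (hFp p hp).1
    rw [this]
  rw [hI, hcard]
  push_cast
  rw [Finset.sum_sub_distrib, Finset.sum_const, nsmul_eq_mul]
  ring
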